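/- Let c ∈ (−√2, √2). For every continuously differentiable function w : ℝ → ℝ with w and w' bounded, one has ∫_ℝ (S_c* w)(x)·R_c(x)·Q_c(x) dx = (1/√2)·∫_ℝ Q_c(x)²·w(x) dx, where S_c* w = −w' + √2·R_c·w. In particular, if ε2 := S_c* w satisfies ∫ ε2·R_c·Q_c = 0, then ∫ Q_c²·w = 0. -/

import Mathlib

open Real MeasureTheory

/-- The real part of the traveling-wave profile. -/
noncomputable def Rc (c x : ℝ) : ℝ :=
  Real.sqrt ((2 - c ^ 2) / 2) * Real.tanh (Real.sqrt (2 - c ^ 2) * x / 2)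

/-- The soliton profile `Q_c(x) = (β²/2) sech²(βx/2)` with `β = √(2 - c²)`. -/
noncomputable def Q (c x : ℝ) : ℝ :=
  (Real.sqrt (2 - c ^ 2)) ^ 2 / 2
    * ((Real.cosh (Real.sqrt (2 - c ^ 2) * x / 2))⁻¹) ^ 2

open Filter Set Topology

lemma myHasDerivAt_tanh (x : ℝ) : HasDerivAt Real.tanh ((Real.cosh x)⁻¹ ^ 2) x := by
  have h := (Real.hasDerivAt_sinh x).div (Real.hasDerivAt_cosh x) (ne_of_gt (Real.cosh_pos x))
  have he : Real.tanh = fun y => Real.sinh y / Real.cosh y :=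
    funext fun y => Real.tanh_eq_sinh_div_cosh y
  rw [he]
  refine h.congr_deriv ?_
  have hc := Real.cosh_pos x
  have hid := Real.cosh_sq x
  field_simp
  nlinarith [hid]

lemma tanh_formula (x : ℝ) :
    Real.tanh x = (1 - Real.exp (-(2*x))) / (1 + Real.exp (-(2*x))) := by
  rw [Real.tanh_eq_sinh_div_cosh, Real.sinh_eq, Real.cosh_eq]
  have h2 : (0:ℝ) < 1 + Real.exp (-(2*x)) := by positivity
  rw [div_eq_div_iff (by positivity) (ne_of_gt h2)]
  have e1 : Real.exp x * Real.exp (-(2*x)) = Real.exp (-x) := by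
    rw [← Real.exp_add]; ring_nf
  linear_combination e1

lemma tanh_tendsto_atTop : Tendsto Real.tanh atTop (𝓝 1) := by
  have h0 : Tendsto (fun x : ℝ => Real.exp (-(2*x))) atTop (𝓝 0) := by
    apply Real.tendsto_exp_atBot.comp
    apply tendsto_neg_atBot_iff.2
    exact tendsto_id.const_mul_atTop two_pos
  have h := ((tendsto_const_nhds (α := ℝ) (x := (1:ℝ))).sub h0).div
    ((tendsto_const_nhds (α := ℝ) (x := (1:ℝ))).add h0) (by norm_num : (1:ℝ) + 0 ≠ 0)
  simp only [sub_zero, add_zero, div_one] at h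
  exact h.congr fun x => (tanh_formula x).symm

lemma tanh_tendsto_atBot : Tendsto Real.tanh atBot (𝓝 (-1)) := by
  have h : Tendsto (fun x : ℝ => -Real.tanh (-x)) atBot (𝓝 (-1)) :=
    (tanh_tendsto_atTop.comp tendsto_neg_atBot_atTop).neg
  exact h.congr fun x => by rw [Real.tanh_neg, neg_neg]

lemma abs_tanh_le_one (x : ℝ) : |Real.tanh x| ≤ 1 := by
  rw [Real.tanh_eq_sinh_div_cosh, abs_div, abs_of_pos (Real.cosh_pos x),
    div_le_one (Real.cosh_pos x)]
  nlinarith [sq_abs (Real.sinh x), Real.cosh_sq x, Real.cosh_pos x, abs_nonneg (Real.sinh x)]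

section withc
variable {c : ℝ}

lemma hasDerivAt_Rc (h2 : 0 < 2 - c ^ 2) (x : ℝ) :
    HasDerivAt (Rc c) (Q c x / Real.sqrt 2) x := by
  set b := Real.sqrt (2 - c ^ 2) with hb
  have hu : HasDerivAt (fun y : ℝ => b * y / 2) (b / 2) x := by
    simpa using ((hasDerivAt_id x).const_mul b).div_const 2
  have h := ((myHasDerivAt_tanh (b * x / 2)).comp x hu).const_mul (Real.sqrt ((2 - c ^ 2) / 2))
  refine h.congr_deriv ?_
  have hs2 : (0:ℝ) < Real.sqrt 2 := by positivity
  have hcp := Real.cosh_pos (b * x / 2)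
  rw [Q, Real.sqrt_div h2.le, ← hb]
  field_simp

lemma hasDerivAt_Q (h2 : 0 < 2 - c ^ 2) (x : ℝ) :
    HasDerivAt (Q c) (-(Real.sqrt 2 * Rc c x * Q c x)) x := by
  set b := Real.sqrt (2 - c ^ 2) with hb
  have hu : HasDerivAt (fun y : ℝ => b * y / 2) (b / 2) x := by
    simpa using ((hasDerivAt_id x).const_mul b).div_const 2
  have hch : HasDerivAt (fun y : ℝ => Real.cosh (b * y / 2))
      (Real.sinh (b * x / 2) * (b / 2)) x :=
    by exact (Real.hasDerivAt_cosh (b * x / 2)).comp x hu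
  have hinv := hch.inv (ne_of_gt (Real.cosh_pos _))
  have hpow := hinv.pow 2
  have h := hpow.const_mul (b ^ 2 / 2)
  refine h.congr_deriv ?_
  have hcp := Real.cosh_pos (b * x / 2)
  have hs2 : (0:ℝ) < Real.sqrt 2 := by positivity
  rw [Rc, Q, Real.tanh_eq_sinh_div_cosh, Real.sqrt_div h2.le, ← hb]
  simp only [Pi.inv_apply]
  field_simp
  rw [show (2:ℕ) - 1 = 1 from rfl, pow_one, Nat.cast_ofNat]
  field_simp

lemma Q_nonneg (x : ℝ) : 0 ≤ Q c x := by unfold Q; positivity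

lemma Q_le (x : ℝ) : Q c x ≤ (Real.sqrt (2 - c ^ 2)) ^ 2 / 2 := by
  unfold Q
  have h0 := Real.cosh_pos (Real.sqrt (2 - c ^ 2) * x / 2)
  have h1 : (Real.cosh (Real.sqrt (2 - c ^ 2) * x / 2))⁻¹ ≤ 1 := by
    rw [inv_le_one_iff₀]; right; exact Real.one_le_cosh _
  have h2 : 0 ≤ (Real.cosh (Real.sqrt (2 - c ^ 2) * x / 2))⁻¹ := inv_nonneg.2 h0.le
  have h3 : ((Real.cosh (Real.sqrt (2 - c ^ 2) * x / 2))⁻¹) ^ 2 ≤ 1 := pow_le_one₀ h2 h1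
  nlinarith [mul_nonneg (by positivity : (0:ℝ) ≤ (Real.sqrt (2 - c ^ 2)) ^ 2 / 2)
    (sub_nonneg.2 h3)]

lemma Rc_abs_le (x : ℝ) : |Rc c x| ≤ Real.sqrt ((2 - c ^ 2) / 2) := by
  rw [Rc, abs_mul, abs_of_nonneg (Real.sqrt_nonneg _)]
  calc Real.sqrt ((2 - c ^ 2) / 2) * |Real.tanh (Real.sqrt (2 - c ^ 2) * x / 2)|
      ≤ Real.sqrt ((2 - c ^ 2) / 2) * 1 :=
        mul_le_mul_of_nonneg_left (abs_tanh_le_one _) (Real.sqrt_nonneg _)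
    _ = _ := mul_one _

lemma Rc_tendsto_atTop (h2 : 0 < 2 - c ^ 2) :
    Tendsto (Rc c) atTop (𝓝 (Real.sqrt ((2 - c ^ 2) / 2))) := by
  have hb : 0 < Real.sqrt (2 - c ^ 2) := Real.sqrt_pos.2 h2
  have harg : Tendsto (fun x : ℝ => Real.sqrt (2 - c ^ 2) * x / 2) atTop atTop :=
    (tendsto_id.const_mul_atTop hb).atTop_div_const two_pos
  have h := (tanh_tendsto_atTop.comp harg).const_mul (Real.sqrt ((2 - c ^ 2) / 2))
  rw [mul_one] at h
  exact h

lemma Q_integrable (h2 : 0 < 2 - c ^ 2) : Integrable (Q c) := by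
  have hderiv : ∀ x, HasDerivAt (fun y => Real.sqrt 2 * Rc c y) (Q c x) x := by
    intro x
    have h := (hasDerivAt_Rc h2 x).const_mul (Real.sqrt 2)
    have hs2 : Real.sqrt 2 ≠ 0 := by positivity
    simpa [mul_div_cancel₀ _ hs2] using h
  have hIoi : IntegrableOn (Q c) (Ioi 0) := by
    apply integrableOn_Ioi_deriv_of_nonneg' (l := Real.sqrt 2 * Real.sqrt ((2 - c ^ 2) / 2))
      (fun x _ => hderiv x) (fun x _ => Q_nonneg x)
    exact (Rc_tendsto_atTop h2).const_mul _
  have hIic : IntegrableOn (Q c) (Iic 0) := by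
    have A : MeasurableEmbedding fun x : ℝ => -x :=
      (Homeomorph.neg ℝ).isClosedEmbedding.measurableEmbedding
    have hmap : (volume : Measure ℝ) = Measure.map (fun x : ℝ => -x) volume :=
      (Measure.map_neg_eq_self (volume : Measure ℝ)).symm
    have hiff := A.integrableOn_map_iff (f := Q c) (s := Iic (0:ℝ)) (μ := (volume : Measure ℝ))
    rw [← hmap] at hiff
    rw [hiff]
    have hpre : (fun x : ℝ => -x) ⁻¹' (Iic 0) = Ici 0 := by
      ext y; simp [neg_le]
    rw [hpre]
    have heq : (Q c ∘ fun x : ℝ => -x) = Q c := by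
      funext y
      simp only [Q, Function.comp]
      rw [show Real.sqrt (2 - c ^ 2) * -y / 2 = -(Real.sqrt (2 - c ^ 2) * y / 2) by ring,
        Real.cosh_neg]
    rw [heq, integrableOn_Ici_iff_integrableOn_Ioi]
    exact hIoi
  rw [← integrableOn_univ, ← Set.Iic_union_Ioi (a := (0:ℝ))]
  exact hIic.union hIoi

end withc

/-- For `w` of class `C¹` with `w, w'` bounded,
`∫ (S_c* w) R_c Q_c = (1/√2) ∫ Q_c² w`; in particular if `ε₂ = S_c* w` is
orthogonal to `R_c Q_c`, then `∫ Q_c² w = 0`. -/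
theorem Sst_orthogonality_transfer (c : ℝ)
    (hc : c ∈ Set.Ioo (-Real.sqrt 2) (Real.sqrt 2))
    (w : ℝ → ℝ) (hw : ContDiff ℝ 1 w)
    (hwb : ∃ M, ∀ x, |w x| ≤ M) (hw'b : ∃ M, ∀ x, |deriv w x| ≤ M) :
    (∫ x, (-deriv w x + Real.sqrt 2 * Rc c x * w x) * Rc c x * Q c x)
      = (1 / Real.sqrt 2) * ∫ x, (Q c x) ^ 2 * w x ∧
    ((∫ x, (-deriv w x + Real.sqrt 2 * Rc c x * w x) * Rc c x * Q c x) = 0 →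
      (∫ x, (Q c x) ^ 2 * w x) = 0) := by
  obtain ⟨M, hM⟩ := hwb
  obtain ⟨M', hM'⟩ := hw'b
  have hs2 : (0:ℝ) < Real.sqrt 2 := by positivity
  have h2 : 0 < 2 - c ^ 2 := by
    have h1 : |c| < Real.sqrt 2 := abs_lt.2 ⟨hc.1, hc.2⟩
    have hsq := Real.sq_sqrt (by norm_num : (0:ℝ) ≤ 2)
    nlinarith [sq_abs c, abs_nonneg c, Real.sqrt_nonneg 2]
  have hQint := Q_integrable h2
  set K := Real.sqrt ((2 - c ^ 2) / 2) with hK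
  set B := (Real.sqrt (2 - c ^ 2)) ^ 2 / 2 with hB
  have hK0 : 0 ≤ K := Real.sqrt_nonneg _
  have hB0 : 0 ≤ B := by positivity
  have hM0 : 0 ≤ M := le_trans (abs_nonneg _) (hM 0)
  have hM'0 : 0 ≤ M' := le_trans (abs_nonneg _) (hM' 0)
  have hRcont : Continuous (Rc c) :=
    continuous_iff_continuousAt.2 fun x => (hasDerivAt_Rc h2 x).continuousAt
  have hQcont : Continuous (Q c) :=
    continuous_iff_continuousAt.2 fun x => (hasDerivAt_Q h2 x).continuousAt
  have hwcont : Continuous w := hw.continuous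
  have hw'cont : Continuous (deriv w) := hw.continuous_deriv le_rfl
  have hcrit : ∀ (f : ℝ → ℝ) (C : ℝ), Continuous f → (∀ x, |f x| ≤ C * Q c x) →
      Integrable f := fun f C hfc hfb =>
    (hQint.const_mul C).mono' hfc.aestronglyMeasurable
      (Filter.Eventually.of_forall fun x => by simpa [Real.norm_eq_abs] using hfb x)
  set g : ℝ → ℝ := fun x => Rc c x * Q c x * w x with hgdef
  set g' : ℝ → ℝ := fun x =>
    ((Q c x) ^ 2 / Real.sqrt 2 - Real.sqrt 2 * (Rc c x) ^ 2 * Q c x) * w x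
      + Rc c x * Q c x * deriv w x with hg'def
  have hgderiv : ∀ x, HasDerivAt g (g' x) x := by
    intro x
    have h1 := ((hasDerivAt_Rc h2 x).mul (hasDerivAt_Q h2 x)).mul
      (hw.differentiable one_ne_zero x).hasDerivAt
    refine h1.congr_deriv ?_
    simp only [hg'def, Pi.mul_apply]
    ring
  have hgint : Integrable g := by
    apply hcrit g (K * M) (hRcont.mul hQcont |>.mul hwcont)
    intro x
    have hq0 := Q_nonneg (c := c) x
    have hr := Rc_abs_le (c := c) x
    have hwx := hM x
    calc |g x| = |Rc c x| * Q c x * |w x| := by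
          simp only [hgdef]; rw [abs_mul, abs_mul, abs_of_nonneg hq0]
      _ ≤ K * Q c x * M :=
          mul_le_mul (mul_le_mul hr le_rfl hq0 hK0) hwx (abs_nonneg _)
            (mul_nonneg hK0 hq0)
      _ = K * M * Q c x := by ring
  have hg'int : Integrable g' := by
    apply hcrit g' (B / Real.sqrt 2 * M + Real.sqrt 2 * K ^ 2 * M + K * M')
    · exact ((((hQcont.pow 2).div_const _).sub
        ((continuous_const.mul (hRcont.pow 2)).mul hQcont)).mul hwcont).add
        ((hRcont.mul hQcont).mul hw'cont)
    · intro x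
      have hq0 := Q_nonneg (c := c) x
      have hqB : Q c x ≤ B := Q_le x
      have hr : |Rc c x| ≤ K := Rc_abs_le x
      have hr2 : (Rc c x) ^ 2 ≤ K ^ 2 := by nlinarith [sq_abs (Rc c x), abs_nonneg (Rc c x)]
      have hwx := hM x
      have hw'x := hM' x
      have hA : |(Q c x) ^ 2 / Real.sqrt 2 - Real.sqrt 2 * (Rc c x) ^ 2 * Q c x|
          ≤ (B / Real.sqrt 2 + Real.sqrt 2 * K ^ 2) * Q c x := by
        have ha : (Q c x) ^ 2 / Real.sqrt 2 ≤ B / Real.sqrt 2 * Q c x := by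
          rw [div_mul_eq_mul_div, div_le_div_iff_of_pos_right hs2]
          nlinarith [mul_nonneg (sub_nonneg.2 hqB) hq0]
        have hb' : Real.sqrt 2 * (Rc c x) ^ 2 * Q c x ≤ Real.sqrt 2 * K ^ 2 * Q c x := by
          nlinarith [mul_nonneg (mul_nonneg hs2.le (sub_nonneg.2 hr2)) hq0]
        have h1 : (0:ℝ) ≤ (Q c x) ^ 2 / Real.sqrt 2 := by positivity
        have h2' : (0:ℝ) ≤ Real.sqrt 2 * (Rc c x) ^ 2 * Q c x := by positivity
        rw [abs_le]
        constructor <;> nlinarith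
      calc |g' x| ≤ |((Q c x) ^ 2 / Real.sqrt 2 - Real.sqrt 2 * (Rc c x) ^ 2 * Q c x) * w x|
            + |Rc c x * Q c x * deriv w x| := abs_add_le _ _
        _ = |(Q c x) ^ 2 / Real.sqrt 2 - Real.sqrt 2 * (Rc c x) ^ 2 * Q c x| * |w x|
            + |Rc c x| * Q c x * |deriv w x| := by
            rw [abs_mul, abs_mul, abs_mul, abs_of_nonneg hq0]
        _ ≤ ((B / Real.sqrt 2 + Real.sqrt 2 * K ^ 2) * Q c x) * M
            + K * Q c x * M' :=
            add_le_add
              (mul_le_mul hA hwx (abs_nonneg _) (by positivity))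
              (mul_le_mul (mul_le_mul hr le_rfl hq0 hK0) hw'x (abs_nonneg _)
                (mul_nonneg hK0 hq0))
        _ = (B / Real.sqrt 2 * M + Real.sqrt 2 * K ^ 2 * M + K * M') * Q c x := by ring
  have hint1 : Integrable (fun x => (Q c x) ^ 2 * w x) := by
    apply hcrit _ (B * M) ((hQcont.pow 2).mul hwcont)
    intro x
    have hq0 := Q_nonneg (c := c) x
    have hqB : Q c x ≤ B := Q_le x
    have hwx := hM x
    calc |(Q c x) ^ 2 * w x| = Q c x * Q c x * |w x| := by
          rw [abs_mul, abs_of_nonneg (by positivity : (0:ℝ) ≤ (Q c x) ^ 2)]; ring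
      _ ≤ B * Q c x * M :=
          mul_le_mul (mul_le_mul hqB le_rfl hq0 hB0) hwx (abs_nonneg _)
            (mul_nonneg hB0 hq0)
      _ = B * M * Q c x := by ring
  have hzero : ∫ x, g' x = 0 :=
    integral_eq_zero_of_hasDerivAt_of_integrable hgderiv hg'int hgint
  have heq : ∀ x, (-deriv w x + Real.sqrt 2 * Rc c x * w x) * Rc c x * Q c x
      = (1 / Real.sqrt 2) * ((Q c x) ^ 2 * w x) - g' x := by
    intro x
    simp only [hg'def]
    field_simp
    ring
  have hmain : (∫ x, (-deriv w x + Real.sqrt 2 * Rc c x * w x) * Rc c x * Q c x)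
      = (1 / Real.sqrt 2) * ∫ x, (Q c x) ^ 2 * w x := by
    calc (∫ x, (-deriv w x + Real.sqrt 2 * Rc c x * w x) * Rc c x * Q c x)
        = ∫ x, ((1 / Real.sqrt 2) * ((Q c x) ^ 2 * w x) - g' x) := by
          exact integral_congr_ae (Filter.Eventually.of_forall heq)
      _ = (∫ x, (1 / Real.sqrt 2) * ((Q c x) ^ 2 * w x)) - ∫ x, g' x :=
          integral_sub (hint1.const_mul _) hg'int
      _ = (1 / Real.sqrt 2) * ∫ x, (Q c x) ^ 2 * w x := by
          rw [hzero, sub_zero, integral_const_mul]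
  refine ⟨hmain, fun h0 => ?_⟩
  rw [hmain] at h0
  have : (1 / Real.sqrt 2) ≠ 0 := by positivity
  exact (mul_eq_zero.1 h0).resolve_left this
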